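/- Taylor expansion of the local discretization error (Lemma 2): Fix an integer s ≥ 1 and abscissae c_1, …, c_s ∈ ℝ with c_i ≥ 0, and set c_{s+1} := 1. A TSRK tableau consists of polynomial coefficient functions u_i : ℝ → ℝ and ã_{ij}, a_{ij} : ℝ → ℝ for i = 1, …, s+1 and j = 1, …, s. For integers k ≥ 1 define the polynomial Γ_{ik}(α) := (1/(k−1)!)·[ (1−u_i(α))·(−1)^k/k + Σ_{j=1}^{s} ã_{ij}(α)·(−(1−c_j))^{k−1} + Σ_{j=1}^{s} a_{ij}(α)·c_j^{k−1} − α^k/k ]. For a differentiable function y : ℝ → ℝ^d, a point t ∈ ℝ, a stepsize h > 0, an index i ∈ {1, …, s+1} and α ∈ [0, c_i], define the stage residual E_i(y, t, h, α) := y(t+αh) − (1−u_i(α))·y(t−h) − u_i(α)·y(t) − h·Σ_{j=1}^{s} ã_{ij}(α)·y′(t+(c_j−1)h) − h·Σ_{j=1}^{s} a_{ij}(α)·y′(t+c_j·h). Let p ≥ 1 be an integer, d ≥ 1, t ∈ ℝ, and suppose y : ℝ → ℝ^d is p times continuously differentiable on a neighborhood of [t−1, t+c_max], where c_max := max{c_1,…,c_{s+1}}.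 Then there exist C > 0 and h₀ ∈ (0,1] such that for all h ∈ (0, h₀], all i ∈ {1,…,s+1} and all α ∈ [0,c_i]: ‖E_i(y,t,h,α) + Σ_{k=1}^{p−1} Γ_{ik}(α)·y^{(k)}(t)·h^k‖ ≤ C·h^p. -/

import Mathlib

open Finset in
lemma sum_Icc_one {M : Type*} [AddCommMonoid M] (q : ℕ) (f : ℕ → M) :
    ∑ k ∈ Finset.Icc 1 q, f k = ∑ k ∈ Finset.range q, f (k + 1) := by
  induction q with
  | zero => simp
  | succ n ih => rw [Finset.sum_Icc_succ_top (by omega), ih, Finset.sum_range_succ]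

lemma smul_sum_swap {E : Type*} [AddCommGroup E] [Module ℝ E] {s : ℕ}
    (h : ℝ) (w δ : Fin s → ℝ) (q : ℕ) (D : ℕ → E) :
    h • ∑ j, w j • ∑ k ∈ Finset.range q, (δ j ^ k / (Nat.factorial k : ℝ)) • D (k + 1)
      = ∑ k ∈ Finset.range q,
          (∑ j, h * (w j * (δ j ^ k / (Nat.factorial k : ℝ)))) • D (k + 1) := by
  rw [Finset.smul_sum]
  simp_rw [Finset.smul_sum, smul_smul]
  rw [Finset.sum_comm]
  simp_rw [Finset.sum_smul]

lemma coeff_cancel (k : ℕ) (al hh uA S1 S2 : ℝ) :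
    (al * hh) ^ (k + 1) / (Nat.factorial (k + 1) : ℝ)
      - (1 - uA) * ((-hh) ^ (k + 1) / (Nat.factorial (k + 1) : ℝ))
      - hh ^ (k + 1) / (Nat.factorial k : ℝ) * S1
      - hh ^ (k + 1) / (Nat.factorial k : ℝ) * S2
      + (1 / (Nat.factorial k : ℝ)
          * ((1 - uA) * (-1) ^ (k + 1) / ((k : ℝ) + 1) + S1 + S2 - al ^ (k + 1) / ((k : ℝ) + 1)))
        * hh ^ (k + 1) = 0 := by
  have hfac : (Nat.factorial (k + 1) : ℝ) = ((k : ℝ) + 1) * (Nat.factorial k : ℝ) := by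
    rw [Nat.factorial_succ]; push_cast; ring
  have h1 : (Nat.factorial k : ℝ) ≠ 0 := Nat.cast_ne_zero.2 (Nat.factorial_ne_zero k)
  have h2 : ((k : ℝ) + 1) ≠ 0 := by positivity
  rw [hfac]
  have hneg : (-hh) ^ (k + 1) = (-1) ^ (k + 1) * hh ^ (k + 1) := by
    rw [← neg_one_mul, mul_pow]
  rw [hneg]
  field_simp
  ring

lemma combine {E : Type*} [AddCommGroup E] [Module ℝ E] (q : ℕ)
    (f1 f2 f3 f4 f5 : ℕ → ℝ) (uA : ℝ) (D : ℕ → E)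
    (hk : ∀ k, k < q → f1 k - f2 k - f3 k - f4 k + f5 k = 0) :
    ((∑ k ∈ Finset.range q, f1 k • D (k + 1)) + D 0)
      - ((∑ k ∈ Finset.range q, f2 k • D (k + 1)) + (1 - uA) • D 0)
      - uA • D 0
      - (∑ k ∈ Finset.range q, f3 k • D (k + 1))
      - (∑ k ∈ Finset.range q, f4 k • D (k + 1))
      + (∑ k ∈ Finset.range q, f5 k • D (k + 1)) = 0 := by
  have key : ((∑ k ∈ Finset.range q, f1 k • D (k + 1)) + D 0)
      - ((∑ k ∈ Finset.range q, f2 k • D (k + 1)) + (1 - uA) • D 0)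
      - uA • D 0
      - (∑ k ∈ Finset.range q, f3 k • D (k + 1))
      - (∑ k ∈ Finset.range q, f4 k • D (k + 1))
      + (∑ k ∈ Finset.range q, f5 k • D (k + 1))
      = (∑ k ∈ Finset.range q, (f1 k - f2 k - f3 k - f4 k + f5 k) • D (k + 1))
          + ((1 : ℝ) - (1 - uA) - uA) • D 0 := by
    simp only [sub_smul, add_smul, one_smul, Finset.sum_add_distrib, Finset.sum_sub_distrib]
    abel
  rw [key, Finset.sum_eq_zero, show ((1 : ℝ) - (1 - uA) - uA) = 0 by ring, zero_smul, add_zero]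
  intro k hk'
  rw [hk k (Finset.mem_range.1 hk'), zero_smul]

/-- The key algebraic identity behind the order conditions. -/
lemma tsrk_alg {E : Type*} [AddCommGroup E] [Module ℝ E] {s : ℕ} (q : ℕ)
    (cc : Fin s → ℝ) (uA : ℝ) (w1 w2 : Fin s → ℝ) (α h : ℝ) (D : ℕ → E) :
    (∑ k ∈ Finset.range (q + 1), ((α * h) ^ k / (Nat.factorial k : ℝ)) • D k)
      - (1 - uA) • (∑ k ∈ Finset.range (q + 1), ((-h) ^ k / (Nat.factorial k : ℝ)) • D k)
      - uA • D 0
      - h • ∑ j, w1 j • (∑ k ∈ Finset.range q,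
          (((cc j - 1) * h) ^ k / (Nat.factorial k : ℝ)) • D (k + 1))
      - h • ∑ j, w2 j • (∑ k ∈ Finset.range q,
          ((cc j * h) ^ k / (Nat.factorial k : ℝ)) • D (k + 1))
      + ∑ k ∈ Finset.Icc 1 q,
          ((1 / (Nat.factorial (k - 1) : ℝ) *
            ((1 - uA) * (-1) ^ k / (k : ℝ)
              + (∑ j, w1 j * (-(1 - cc j)) ^ (k - 1))
              + (∑ j, w2 j * (cc j) ^ (k - 1))
              - α ^ k / (k : ℝ))) * h ^ k) • D k
      = 0 := by
  rw [sum_Icc_one, Finset.sum_range_succ', Finset.sum_range_succ', smul_sum_swap, smul_sum_swap]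
  simp only [pow_zero, Nat.factorial_zero, Nat.cast_one, div_one, one_smul, smul_add,
    Finset.smul_sum, smul_smul, Nat.add_sub_cancel, Nat.cast_add, Nat.cast_one]
  refine combine q _ _ _ _ _ uA D ?_
  intro k hkq
  have e3 : (∑ j, h * (w1 j * (((cc j - 1) * h) ^ k / (Nat.factorial k : ℝ))))
      = h ^ (k + 1) / (Nat.factorial k : ℝ) * (∑ j, w1 j * (-(1 - cc j)) ^ k) := by
    rw [Finset.mul_sum]
    refine Finset.sum_congr rfl fun j _ => ?_
    rw [neg_sub, mul_pow]; ring
  have e4 : (∑ j, h * (w2 j * ((cc j * h) ^ k / (Nat.factorial k : ℝ))))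
      = h ^ (k + 1) / (Nat.factorial k : ℝ) * (∑ j, w2 j * (cc j) ^ k) := by
    rw [Finset.mul_sum]
    refine Finset.sum_congr rfl fun j _ => ?_
    rw [mul_pow]; ring
  rw [e3, e4]
  have := coeff_cancel k α h uA (∑ j, w1 j * (-(1 - cc j)) ^ k) (∑ j, w2 j * (cc j) ^ k)
  calc (α * h) ^ (k + 1) / (Nat.factorial (k + 1) : ℝ)
        - (1 - uA) * ((-h) ^ (k + 1) / (Nat.factorial (k + 1) : ℝ))
        - h ^ (k + 1) / (Nat.factorial k : ℝ) * (∑ j, w1 j * (-(1 - cc j)) ^ k)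
        - h ^ (k + 1) / (Nat.factorial k : ℝ) * (∑ j, w2 j * (cc j) ^ k)
        + (1 / (Nat.factorial k : ℝ)
            * ((1 - uA) * (-1) ^ (k + 1) / ((k : ℝ) + 1)
              + (∑ j, w1 j * (-(1 - cc j)) ^ k) + (∑ j, w2 j * (cc j) ^ k)
              - α ^ (k + 1) / ((k : ℝ) + 1))) * h ^ (k + 1) = 0 := this


/-- Two-sided Taylor remainder bound via repeated mean value inequality. -/
lemma taylor_bound_aux {E : Type*} [NormedAddCommGroup E] [NormedSpace ℝ E]
    (a b t : ℝ) (ht : t ∈ Set.Icc a b) :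
    ∀ (m : ℕ) (f : ℝ → E) (C : ℝ),
      (∀ k < m, ∀ x ∈ Set.Icc a b, HasDerivAt (iteratedDeriv k f) (iteratedDeriv (k + 1) f x) x) →
      (∀ x ∈ Set.Icc a b, ‖iteratedDeriv m f x‖ ≤ C) →
      ∀ x ∈ Set.Icc a b,
        ‖f x - ∑ k ∈ Finset.range m,
            ((x - t) ^ k / (Nat.factorial k : ℝ)) • iteratedDeriv k f t‖
          ≤ C * |x - t| ^ m := by
  intro m
  induction m with
  | zero =>
    intro f C _ hC x hx
    simpa [iteratedDeriv_zero] using hC x hx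
  | succ n ih =>
    intro f C hder hC x hx
    have hC0 : 0 ≤ C := le_trans (norm_nonneg _) (hC t ht)
    -- the remainder of `deriv f` to order `n`
    have hg : ∀ z ∈ Set.Icc a b,
        ‖deriv f z - ∑ k ∈ Finset.range n,
            ((z - t) ^ k / (Nat.factorial k : ℝ)) • iteratedDeriv (k + 1) f t‖
          ≤ C * |z - t| ^ n := by
      have := ih (deriv f) C ?_ ?_
      · intro z hz
        simpa only [← iteratedDeriv_succ'] using this z hz
      · intro k hk z hz
        have := hder (k + 1) (by omega) z hz
        simpa only [← iteratedDeriv_succ'] using this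
      · intro z hz
        have := hC z hz
        simpa only [← iteratedDeriv_succ'] using this
    -- the function F := f - Taylor polynomial
    set P : ℝ → E := fun z =>
      ∑ k ∈ Finset.range (n + 1), ((z - t) ^ k / (Nat.factorial k : ℝ)) • iteratedDeriv k f t
      with hP
    set F : ℝ → E := fun z => f z - P z with hF
    have hFderiv : ∀ z ∈ Set.Icc a b,
        HasDerivAt F (deriv f z - ∑ k ∈ Finset.range n,
          ((z - t) ^ k / (Nat.factorial k : ℝ)) • iteratedDeriv (k + 1) f t) z := by
      intro z hz
      have hf' : HasDerivAt f (deriv f z) z := by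
        have := hder 0 (by omega) z hz
        simp only [iteratedDeriv_zero, iteratedDeriv_one, zero_add] at this
        exact this
      have hPz : HasDerivAt P (∑ k ∈ Finset.range n,
          ((z - t) ^ k / (Nat.factorial k : ℝ)) • iteratedDeriv (k + 1) f t) z := by
        rw [hP]
        have : HasDerivAt (fun w : ℝ =>
            ∑ k ∈ Finset.range (n + 1), ((w - t) ^ k / (Nat.factorial k : ℝ)) • iteratedDeriv k f t)
            (∑ k ∈ Finset.range (n + 1),
              ((k : ℝ) * (z - t) ^ (k - 1) / (Nat.factorial k : ℝ)) • iteratedDeriv k f t) z := by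
          refine HasDerivAt.fun_sum fun k _ => ?_
          have h1 : HasDerivAt (fun w : ℝ => (w - t) ^ k) ((k : ℝ) * (z - t) ^ (k - 1)) z := by
            simpa using ((hasDerivAt_id z).sub_const t).fun_pow k
          have h2 : HasDerivAt (fun w : ℝ => ((w - t) ^ k / (Nat.factorial k : ℝ)))
              ((k : ℝ) * (z - t) ^ (k - 1) / (Nat.factorial k : ℝ)) z := h1.div_const _
          exact h2.smul_const _
        convert this using 1
        rw [Finset.sum_range_succ']
        simp only [Nat.cast_zero, zero_mul, zero_div, zero_smul, add_zero, Nat.add_sub_cancel]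
        refine Finset.sum_congr rfl fun k _ => ?_
        congr 1
        rw [Nat.factorial_succ]
        have hk1 : ((k : ℝ) + 1) ≠ 0 := by positivity
        have hkf : (Nat.factorial k : ℝ) ≠ 0 := Nat.cast_ne_zero.2 (Nat.factorial_ne_zero k)
        push_cast
        field_simp
      exact hf'.sub hPz
    -- mean value on uIcc t x
    have huIcc : Set.uIcc t x ⊆ Set.Icc a b := Set.ordConnected_Icc.uIcc_subset ht hx
    have habs : ∀ z ∈ Set.uIcc t x, |z - t| ≤ |x - t| := by
      intro z hz
      rcases le_total t x with h' | h'
      · rw [Set.uIcc_of_le h'] at hz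
        rw [abs_of_nonneg (by linarith [hz.1]), abs_of_nonneg (by linarith)]
        linarith [hz.2]
      · rw [Set.uIcc_of_ge h'] at hz
        rw [abs_of_nonpos (by linarith [hz.2]), abs_of_nonpos (by linarith)]
        linarith [hz.1]
    have hmvt : ‖F x - F t‖ ≤ (C * |x - t| ^ n) * ‖x - t‖ := by
      refine Convex.norm_image_sub_le_of_norm_hasDerivWithin_le
        (f' := fun z => deriv f z - ∑ k ∈ Finset.range n,
          ((z - t) ^ k / (Nat.factorial k : ℝ)) • iteratedDeriv (k + 1) f t)
        (fun z hz => (hFderiv z (huIcc hz)).hasDerivWithinAt)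
        (fun z hz => ?_) (convex_uIcc t x) (Set.left_mem_uIcc) (Set.right_mem_uIcc)
      calc ‖deriv f z - ∑ k ∈ Finset.range n,
            ((z - t) ^ k / (Nat.factorial k : ℝ)) • iteratedDeriv (k + 1) f t‖
          ≤ C * |z - t| ^ n := hg z (huIcc hz)
        _ ≤ C * |x - t| ^ n := by
            exact mul_le_mul_of_nonneg_left
              (pow_le_pow_left₀ (abs_nonneg _) (habs z hz) n) hC0
    have hFt : F t = 0 := by
      rw [hF, hP]
      simp only [sub_eq_zero]
      rw [Finset.sum_eq_single 0]
      · simp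
      · intro k _ hk0
        rcases Nat.exists_eq_succ_of_ne_zero hk0 with ⟨l, rfl⟩
        simp [sub_self]
      · simp
    have : ‖F x‖ ≤ C * |x - t| ^ (n + 1) := by
      have := hmvt
      rw [hFt, sub_zero] at this
      calc ‖F x‖ ≤ (C * |x - t| ^ n) * ‖x - t‖ := this
        _ = C * |x - t| ^ (n + 1) := by
            rw [Real.norm_eq_abs, pow_succ]; ring
    exact this


lemma eqOn_iteratedDerivWithin {E : Type*} [NormedAddCommGroup E] [NormedSpace ℝ E]
    {U : Set ℝ} (hU : IsOpen U) (f : ℝ → E) (n : ℕ) :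
    Set.EqOn (iteratedDerivWithin n f U) (iteratedDeriv n f) U := by
  intro z hz
  rw [iteratedDerivWithin_eq_iteratedFDerivWithin, iteratedDeriv_eq_iteratedFDeriv,
    iteratedFDerivWithin_of_isOpen n hU hz]

lemma hasDerivAt_iteratedDeriv_of_contDiffOn {E : Type*} [NormedAddCommGroup E]
    [NormedSpace ℝ E] {U : Set ℝ} (hU : IsOpen U) {f : ℝ → E} {p : ℕ}
    (hf : ContDiffOn ℝ p f U) {k : ℕ} (hk : k < p) {x : ℝ} (hx : x ∈ U) :
    HasDerivAt (iteratedDeriv k f) (iteratedDeriv (k + 1) f x) x := by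
  have hdiff : DifferentiableOn ℝ (iteratedDerivWithin k f U) U :=
    hf.differentiableOn_iteratedDerivWithin (by exact_mod_cast hk) hU.uniqueDiffOn
  have h1 : DifferentiableAt ℝ (iteratedDerivWithin k f U) x :=
    (hdiff x hx).differentiableAt (hU.mem_nhds hx)
  have h2 : DifferentiableAt ℝ (iteratedDeriv k f) x :=
    h1.congr_of_eventuallyEq
      (((eqOn_iteratedDerivWithin hU f k).symm).eventuallyEq_of_mem (hU.mem_nhds hx))
  have h3 := h2.hasDerivAt
  rw [iteratedDeriv_succ]
  exact h3

lemma continuousOn_iteratedDeriv_of_contDiffOn {E : Type*} [NormedAddCommGroup E]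
    [NormedSpace ℝ E] {U : Set ℝ} (hU : IsOpen U) {f : ℝ → E} {p : ℕ}
    (hf : ContDiffOn ℝ p f U) :
    ContinuousOn (iteratedDeriv p f) U :=
  (hf.continuousOn_iteratedDerivWithin le_rfl hU.uniqueDiffOn).congr
    (eqOn_iteratedDerivWithin hU f p).symm




/-- The order polynomial `Γ_{ik}` of a TSRK method with `s` stages, for a row with
coefficient functions `u` (previous-values weight), `atil` (previous-step stage weights)
and `a` (current-step stage weights), with abscissae `c`. -/
noncomputable def GammaRow (s : ℕ) (c : Fin s → ℝ) (u : ℝ → ℝ) (atil a : Fin s → ℝ → ℝ)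
    (k : ℕ) (α : ℝ) : ℝ :=
  (1 / (Nat.factorial (k - 1) : ℝ)) *
    ((1 - u α) * (-1) ^ k / k
      + (∑ j, atil j α * (-(1 - c j)) ^ (k - 1))
      + (∑ j, a j α * (c j) ^ (k - 1))
      - α ^ k / k)

/-- The stage residual (local discretization error) of one row of a TSRK method:
`E_i(y,t,h,α) = y(t+αh) − (1−u(α))·y(t−h) − u(α)·y(t)
  − h·Σ_j ã_j(α)·y′(t+(c_j−1)h) − h·Σ_j a_j(α)·y′(t+c_j h)`. -/
noncomputable def stageResidual {E : Type*} [NormedAddCommGroup E] [NormedSpace ℝ E]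
    (s : ℕ) (c : Fin s → ℝ) (u : ℝ → ℝ) (atil a : Fin s → ℝ → ℝ)
    (y : ℝ → E) (t h α : ℝ) : E :=
  y (t + α * h) - (1 - u α) • y (t - h) - u α • y t
    - h • ∑ j, atil j α • deriv y (t + (c j - 1) * h)
    - h • ∑ j, a j α • deriv y (t + c j * h)

set_option maxHeartbeats 1000000 in
/-- Taylor expansion of the local discretization error (Lemma 2): for a `p` times
continuously differentiable solution, each stage residual equals
`−Σ_{k=1}^{p−1} Γ_{ik}(α)·y^{(k)}(t)·h^k + O(h^p)`, uniformly in `α ∈ [0,c_i]`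
and in the stage index `i`. -/
theorem tsrk_local_error_expansion (s d p : ℕ) (hs : 1 ≤ s) (hd : 1 ≤ d) (hp : 1 ≤ p)
    (c : Fin (s + 1) → ℝ) (hc : ∀ i, 0 ≤ c i) (hcl : c (Fin.last s) = 1)
    (u : Fin (s + 1) → ℝ → ℝ) (atil a : Fin (s + 1) → Fin s → ℝ → ℝ)
    (hu : ∀ i, ∃ P : Polynomial ℝ, ∀ x, u i x = P.eval x)
    (hatil : ∀ i j, ∃ P : Polynomial ℝ, ∀ x, atil i j x = P.eval x)
    (ha : ∀ i j, ∃ P : Polynomial ℝ, ∀ x, a i j x = P.eval x)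
    (y : ℝ → EuclideanSpace ℝ (Fin d)) (t : ℝ)
    (U : Set ℝ) (hU : IsOpen U)
    (hUsub : Set.Icc (t - 1) (t + Finset.univ.sup' Finset.univ_nonempty c) ⊆ U)
    (hy : ContDiffOn ℝ p y U) :
    ∃ C > 0, ∃ h₀ ∈ Set.Ioc (0 : ℝ) 1, ∀ h ∈ Set.Ioc (0 : ℝ) h₀, ∀ i : Fin (s + 1),
      ∀ α ∈ Set.Icc (0 : ℝ) (c i),
        ‖stageResidual s (fun j => c j.castSucc) (u i) (atil i) (a i) y t h α
          + ∑ k ∈ Finset.Icc 1 (p - 1),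
              (GammaRow s (fun j => c j.castSucc) (u i) (atil i) (a i) k α * h ^ k) •
                iteratedDeriv k y t‖ ≤ C * h ^ p := by
  obtain ⟨q, rfl⟩ : ∃ q, p = q + 1 := ⟨p - 1, by omega⟩
  simp only [Nat.add_sub_cancel]
  set cc : Fin s → ℝ := fun j => c j.castSucc with hccdef
  set M := Finset.univ.sup' Finset.univ_nonempty c with hMdef
  have hM1 : (1 : ℝ) ≤ M := by
    rw [← hcl]; exact Finset.le_sup' c (Finset.mem_univ _)
  have hMc : ∀ i, c i ≤ M := fun i => Finset.le_sup' c (Finset.mem_univ i)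
  have hM0 : (0 : ℝ) ≤ M := by linarith
  have htI : t ∈ Set.Icc (t - 1) (t + M) := by constructor <;> linarith
  -- bound on the (q+1)-st derivative
  obtain ⟨C0', hC0'⟩ := (isCompact_Icc (a := t - 1) (b := t + M)).exists_bound_of_continuousOn
    ((continuousOn_iteratedDeriv_of_contDiffOn hU hy).mono hUsub)
  set C0 := max C0' 0 with hC0def
  have hC0 : ∀ x ∈ Set.Icc (t - 1) (t + M), ‖iteratedDeriv (q + 1) y x‖ ≤ C0 :=
    fun x hx => le_trans (hC0' x hx) (le_max_left _ _)
  have hC0nn : (0 : ℝ) ≤ C0 := le_max_right _ _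
  -- Taylor bounds
  have hT1 : ∀ x ∈ Set.Icc (t - 1) (t + M),
      ‖y x - ∑ k ∈ Finset.range (q + 1),
          ((x - t) ^ k / (Nat.factorial k : ℝ)) • iteratedDeriv k y t‖
        ≤ C0 * |x - t| ^ (q + 1) :=
    taylor_bound_aux _ _ t htI (q + 1) y C0
      (fun k hk x hx => hasDerivAt_iteratedDeriv_of_contDiffOn hU hy hk (hUsub hx))
      hC0
  have hT2 : ∀ x ∈ Set.Icc (t - 1) (t + M),
      ‖deriv y x - ∑ k ∈ Finset.range q,
          ((x - t) ^ k / (Nat.factorial k : ℝ)) • iteratedDeriv (k + 1) y t‖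
        ≤ C0 * |x - t| ^ q := by
    have h' := taylor_bound_aux (t - 1) (t + M) t htI q (deriv y) C0
      (fun k hk x hx => by
        have := hasDerivAt_iteratedDeriv_of_contDiffOn hU hy
          (show k + 1 < q + 1 by omega) (hUsub hx)
        simpa only [← iteratedDeriv_succ'] using this)
      (fun x hx => by
        have := hC0 x hx
        simpa only [← iteratedDeriv_succ'] using this)
    intro x hx
    have := h' x hx
    simpa only [← iteratedDeriv_succ'] using this
  -- uniform bound on the coefficient functions on [0, M]
  have hcontu : ∀ i, Continuous (u i) := by
    intro i; obtain ⟨P, hP⟩ := hu i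
    have : u i = fun x => P.eval x := funext hP
    rw [this]; exact P.continuous
  have hcontat : ∀ i j, Continuous (atil i j) := by
    intro i j; obtain ⟨P, hP⟩ := hatil i j
    have : atil i j = fun x => P.eval x := funext hP
    rw [this]; exact P.continuous
  have hconta : ∀ i j, Continuous (a i j) := by
    intro i j; obtain ⟨P, hP⟩ := ha i j
    have : a i j = fun x => P.eval x := funext hP
    rw [this]; exact P.continuous
  set G : ℝ → ℝ := fun x => (∑ i, |u i x|) + ((∑ i, ∑ j, |atil i j x|) + (∑ i, ∑ j, |a i j x|))
    with hGdef
  have hGcont : Continuous G := by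
    refine Continuous.add ?_ (Continuous.add ?_ ?_)
    · exact continuous_finset_sum _ fun i _ => (hcontu i).abs
    · exact continuous_finset_sum _ fun i _ =>
        continuous_finset_sum _ fun j _ => (hcontat i j).abs
    · exact continuous_finset_sum _ fun i _ =>
        continuous_finset_sum _ fun j _ => (hconta i j).abs
  obtain ⟨K', hK'⟩ := (isCompact_Icc (a := (0 : ℝ)) (b := M)).exists_bound_of_continuousOn
    hGcont.continuousOn
  set K := max K' 0 with hKdef
  have hKnn : (0 : ℝ) ≤ K := le_max_right _ _
  have hKG : ∀ x ∈ Set.Icc (0 : ℝ) M, G x ≤ K := fun x hx =>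
    le_trans (le_trans (le_abs_self _) (hK' x hx)) (le_max_left _ _)
  have hsum_nonneg1 : ∀ x, (0 : ℝ) ≤ ∑ i, |u i x| :=
    fun x => Finset.sum_nonneg fun _ _ => abs_nonneg _
  have hsum_nonneg2 : ∀ x, (0 : ℝ) ≤ ∑ i, ∑ j, |atil i j x| :=
    fun x => Finset.sum_nonneg fun _ _ => Finset.sum_nonneg fun _ _ => abs_nonneg _
  have hsum_nonneg3 : ∀ x, (0 : ℝ) ≤ ∑ i, ∑ j, |a i j x| :=
    fun x => Finset.sum_nonneg fun _ _ => Finset.sum_nonneg fun _ _ => abs_nonneg _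
  have hKu : ∀ i, ∀ x ∈ Set.Icc (0 : ℝ) M, |u i x| ≤ K := by
    intro i x hx
    have h1 : |u i x| ≤ ∑ i', |u i' x| :=
      Finset.single_le_sum (f := fun i' => |u i' x|) (fun _ _ => abs_nonneg _)
        (Finset.mem_univ i)
    have := hKG x hx
    rw [hGdef] at this
    have h2 := hsum_nonneg2 x
    have h3 := hsum_nonneg3 x
    dsimp only at this ⊢
    linarith
  have hKat : ∀ i j, ∀ x ∈ Set.Icc (0 : ℝ) M, |atil i j x| ≤ K := by
    intro i j x hx
    have h1 : |atil i j x| ≤ ∑ j', |atil i j' x| :=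
      Finset.single_le_sum (f := fun j' => |atil i j' x|) (fun _ _ => abs_nonneg _)
        (Finset.mem_univ j)
    have h1' : (∑ j', |atil i j' x|) ≤ ∑ i', ∑ j', |atil i' j' x| :=
      Finset.single_le_sum (f := fun i' => ∑ j', |atil i' j' x|)
        (fun _ _ => Finset.sum_nonneg fun _ _ => abs_nonneg _) (Finset.mem_univ i)
    have := hKG x hx
    rw [hGdef] at this
    have h2 := hsum_nonneg1 x
    have h3 := hsum_nonneg3 x
    dsimp only at this ⊢
    linarith
  have hKa : ∀ i j, ∀ x ∈ Set.Icc (0 : ℝ) M, |a i j x| ≤ K := by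
    intro i j x hx
    have h1 : |a i j x| ≤ ∑ j', |a i j' x| :=
      Finset.single_le_sum (f := fun j' => |a i j' x|) (fun _ _ => abs_nonneg _)
        (Finset.mem_univ j)
    have h1' : (∑ j', |a i j' x|) ≤ ∑ i', ∑ j', |a i' j' x| :=
      Finset.single_le_sum (f := fun i' => ∑ j', |a i' j' x|)
        (fun _ _ => Finset.sum_nonneg fun _ _ => abs_nonneg _) (Finset.mem_univ i)
    have := hKG x hx
    rw [hGdef] at this
    have h2 := hsum_nonneg1 x
    have h3 := hsum_nonneg2 x
    dsimp only at this ⊢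
    linarith
  -- the constant
  refine ⟨(2 + K) * C0 * M ^ (q + 1) + 2 * s * K * C0 * M ^ q + 1, ?_, 1,
    ⟨zero_lt_one, le_refl 1⟩, ?_⟩
  · have h1 : (0 : ℝ) ≤ (2 + K) * C0 * M ^ (q + 1) :=
      mul_nonneg (mul_nonneg (by linarith) hC0nn) (pow_nonneg hM0 _)
    have h2 : (0 : ℝ) ≤ 2 * s * K * C0 * M ^ q :=
      mul_nonneg (mul_nonneg (mul_nonneg (by positivity) hKnn) hC0nn) (pow_nonneg hM0 _)
    linarith
  intro h hh i α hα
  have hh0 : (0 : ℝ) < h := hh.1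
  have hh1 : h ≤ 1 := hh.2
  have hα0 : (0 : ℝ) ≤ α := hα.1
  have hαM : α ≤ M := le_trans hα.2 (hMc i)
  have hαmem : α ∈ Set.Icc (0 : ℝ) M := ⟨hα0, hαM⟩
  have hcc0 : ∀ j, (0 : ℝ) ≤ cc j := fun j => hc _
  have hccM : ∀ j, cc j ≤ M := fun j => hMc _
  have hMh0 : (0 : ℝ) ≤ M * h := mul_nonneg hM0 hh0.le
  -- memberships
  have hmem1 : t + α * h ∈ Set.Icc (t - 1) (t + M) := by
    constructor
    · nlinarith
    · nlinarith
  have hmem2 : t - h ∈ Set.Icc (t - 1) (t + M) := by constructor <;> linarith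
  have hmem3 : ∀ j, t + (cc j - 1) * h ∈ Set.Icc (t - 1) (t + M) := by
    intro j
    have := hcc0 j; have := hccM j
    constructor
    · nlinarith
    · nlinarith
  have hmem4 : ∀ j, t + cc j * h ∈ Set.Icc (t - 1) (t + M) := by
    intro j
    have := hcc0 j; have := hccM j
    constructor
    · nlinarith
    · nlinarith
  -- |δ| ≤ M * h bounds
  have habs1 : |α * h| ≤ M * h := by
    rw [abs_of_nonneg (mul_nonneg hα0 hh0.le)]
    nlinarith
  have habs2 : |-h| ≤ M * h := by
    rw [abs_neg, abs_of_nonneg hh0.le]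
    nlinarith
  have habs3 : ∀ j, |(cc j - 1) * h| ≤ M * h := by
    intro j
    have := hcc0 j; have := hccM j
    rw [abs_mul, abs_of_nonneg hh0.le]
    have h1 : |cc j - 1| ≤ M := abs_le.2 ⟨by linarith, by linarith⟩
    nlinarith
  have habs4 : ∀ j, |cc j * h| ≤ M * h := by
    intro j
    have := hcc0 j; have := hccM j
    rw [abs_mul, abs_of_nonneg hh0.le]
    have h1 : |cc j| ≤ M := abs_le.2 ⟨by linarith, by linarith⟩
    nlinarith
  -- remainder bounds
  have hR1 : ‖y (t + α * h) - ∑ k ∈ Finset.range (q + 1),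
      ((α * h) ^ k / (Nat.factorial k : ℝ)) • iteratedDeriv k y t‖
      ≤ C0 * (M * h) ^ (q + 1) := by
    have h1 := hT1 _ hmem1
    rw [show t + α * h - t = α * h by ring] at h1
    exact le_trans h1 (mul_le_mul_of_nonneg_left
      (pow_le_pow_left₀ (abs_nonneg _) habs1 _) hC0nn)
  have hR2 : ‖y (t - h) - ∑ k ∈ Finset.range (q + 1),
      ((-h) ^ k / (Nat.factorial k : ℝ)) • iteratedDeriv k y t‖
      ≤ C0 * (M * h) ^ (q + 1) := by
    have h1 := hT1 _ hmem2
    rw [show t - h - t = -h by ring] at h1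
    exact le_trans h1 (mul_le_mul_of_nonneg_left
      (pow_le_pow_left₀ (abs_nonneg _) habs2 _) hC0nn)
  have hR3 : ∀ j, ‖deriv y (t + (cc j - 1) * h) - ∑ k ∈ Finset.range q,
      (((cc j - 1) * h) ^ k / (Nat.factorial k : ℝ)) • iteratedDeriv (k + 1) y t‖
      ≤ C0 * (M * h) ^ q := by
    intro j
    have h1 := hT2 _ (hmem3 j)
    rw [show t + (cc j - 1) * h - t = (cc j - 1) * h by ring] at h1
    exact le_trans h1 (mul_le_mul_of_nonneg_left
      (pow_le_pow_left₀ (abs_nonneg _) (habs3 j) _) hC0nn)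
  have hR4 : ∀ j, ‖deriv y (t + cc j * h) - ∑ k ∈ Finset.range q,
      ((cc j * h) ^ k / (Nat.factorial k : ℝ)) • iteratedDeriv (k + 1) y t‖
      ≤ C0 * (M * h) ^ q := by
    intro j
    have h1 := hT2 _ (hmem4 j)
    rw [show t + cc j * h - t = cc j * h by ring] at h1
    exact le_trans h1 (mul_le_mul_of_nonneg_left
      (pow_le_pow_left₀ (abs_nonneg _) (habs4 j) _) hC0nn)
  -- the algebraic identity
  have hid : stageResidual s cc (u i) (atil i) (a i) y t h α
      + ∑ k ∈ Finset.Icc 1 q,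
          (GammaRow s cc (u i) (atil i) (a i) k α * h ^ k) • iteratedDeriv k y t
    = (y (t + α * h) - ∑ k ∈ Finset.range (q + 1),
          ((α * h) ^ k / (Nat.factorial k : ℝ)) • iteratedDeriv k y t)
      - (1 - u i α) • (y (t - h) - ∑ k ∈ Finset.range (q + 1),
          ((-h) ^ k / (Nat.factorial k : ℝ)) • iteratedDeriv k y t)
      - h • ∑ j, atil i j α • (deriv y (t + (cc j - 1) * h) - ∑ k ∈ Finset.range q,
          (((cc j - 1) * h) ^ k / (Nat.factorial k : ℝ)) • iteratedDeriv (k + 1) y t)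
      - h • ∑ j, a i j α • (deriv y (t + cc j * h) - ∑ k ∈ Finset.range q,
          ((cc j * h) ^ k / (Nat.factorial k : ℝ)) • iteratedDeriv (k + 1) y t) := by
    have halg := tsrk_alg (E := EuclideanSpace ℝ (Fin d)) q cc (u i α)
      (fun j => atil i j α) (fun j => a i j α) α h (fun k => iteratedDeriv k y t)
    simp only [iteratedDeriv_zero] at halg
    rw [← sub_eq_zero, ← halg]
    simp only [stageResidual, GammaRow, smul_sub, Finset.sum_sub_distrib]
    module
  rw [hid]
  -- final estimate
  have hu1K : |1 - u i α| ≤ 1 + K := by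
    have := hKu i α hαmem
    have := abs_le.1 this
    exact abs_le.2 ⟨by linarith [this.1], by linarith [this.2]⟩
  have hS3 : ‖∑ j, atil i j α • (deriv y (t + (cc j - 1) * h) - ∑ k ∈ Finset.range q,
      (((cc j - 1) * h) ^ k / (Nat.factorial k : ℝ)) • iteratedDeriv (k + 1) y t)‖
      ≤ s * (K * (C0 * (M * h) ^ q)) := by
    refine le_trans (norm_sum_le _ _) ?_
    have : ∀ j : Fin s, j ∈ Finset.univ →
        ‖atil i j α • (deriv y (t + (cc j - 1) * h) - ∑ k ∈ Finset.range q,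
          (((cc j - 1) * h) ^ k / (Nat.factorial k : ℝ)) • iteratedDeriv (k + 1) y t)‖
        ≤ K * (C0 * (M * h) ^ q) := by
      intro j _
      rw [norm_smul, Real.norm_eq_abs]
      exact mul_le_mul (hKat i j α hαmem) (hR3 j) (norm_nonneg _) hKnn
    refine le_trans (Finset.sum_le_sum this) ?_
    rw [Finset.sum_const, Finset.card_univ, Fintype.card_fin, nsmul_eq_mul]
  have hS4 : ‖∑ j, a i j α • (deriv y (t + cc j * h) - ∑ k ∈ Finset.range q,
      ((cc j * h) ^ k / (Nat.factorial k : ℝ)) • iteratedDeriv (k + 1) y t)‖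
      ≤ s * (K * (C0 * (M * h) ^ q)) := by
    refine le_trans (norm_sum_le _ _) ?_
    have : ∀ j : Fin s, j ∈ Finset.univ →
        ‖a i j α • (deriv y (t + cc j * h) - ∑ k ∈ Finset.range q,
          ((cc j * h) ^ k / (Nat.factorial k : ℝ)) • iteratedDeriv (k + 1) y t)‖
        ≤ K * (C0 * (M * h) ^ q) := by
      intro j _
      rw [norm_smul, Real.norm_eq_abs]
      exact mul_le_mul (hKa i j α hαmem) (hR4 j) (norm_nonneg _) hKnn
    refine le_trans (Finset.sum_le_sum this) ?_
    rw [Finset.sum_const, Finset.card_univ, Fintype.card_fin, nsmul_eq_mul]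
  calc ‖_ - _ - _ - _‖
      ≤ ‖_ - _ - _‖ + ‖_‖ := norm_sub_le _ _
    _ ≤ (‖_ - _‖ + ‖_‖) + ‖_‖ := by gcongr; exact norm_sub_le _ _
    _ ≤ ((‖_‖ + ‖_‖) + ‖_‖) + ‖_‖ := by gcongr <;> exact norm_sub_le _ _
    _ ≤ ((C0 * (M * h) ^ (q + 1) + (1 + K) * (C0 * (M * h) ^ (q + 1)))
          + h * (s * (K * (C0 * (M * h) ^ q))))
          + h * (s * (K * (C0 * (M * h) ^ q))) := by
        refine add_le_add (add_le_add (add_le_add ?_ ?_) ?_) ?_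
        · exact hR1
        · rw [norm_smul, Real.norm_eq_abs]
          exact mul_le_mul hu1K hR2 (norm_nonneg _) (by linarith)
        · rw [norm_smul, Real.norm_eq_abs, abs_of_nonneg hh0.le]
          exact mul_le_mul_of_nonneg_left hS3 hh0.le
        · rw [norm_smul, Real.norm_eq_abs, abs_of_nonneg hh0.le]
          exact mul_le_mul_of_nonneg_left hS4 hh0.le
    _ = ((2 + K) * C0 * M ^ (q + 1) + 2 * s * K * C0 * M ^ q) * h ^ (q + 1) := by
        ring
    _ ≤ ((2 + K) * C0 * M ^ (q + 1) + 2 * s * K * C0 * M ^ q + 1) * h ^ (q + 1) := by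
        have : (0 : ℝ) ≤ h ^ (q + 1) := by positivity
        nlinarith
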